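/- (Asymptotic stability of TASE, Theorem 1.) Fix an integer p ≥ 1, a real α > 0, and a complex number λ ≠ 0 with Re λ ≤ 0. Then the modified dimensionless eigenvalue tends to a negative real constant: the function t ↦ (t*λ) * T p α (t*λ) (for real t) tends to -(2^p - 1)/α as t → +∞. Moreover, if C > 0 and α ≥ (2^p - 1)/C, then this limit satisfies -C ≤ -(2^p - 1)/α < 0, so the limit lies on the negative real axis within distance C of the origin. -/

import Mathlib

open Filter

noncomputable def T : ℕ → ℝ → ℂ → ℂ
  | 0, _, _ => 1
  | 1, α, z => (1 - (α : ℂ) * z)⁻¹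
  | p + 2, α, z =>
      (2 ^ (p + 1) * T (p + 1) (α / 2) z - T (p + 1) α z) / (2 ^ (p + 1) - 1)

lemma tase_key (μ : ℂ) (hμ : μ ≠ 0) :
    ∀ p : ℕ, ∀ α : ℝ, 0 < α →
      Tendsto (fun t : ℝ => ((t : ℂ) * μ) * T (p + 1) α ((t : ℂ) * μ)) atTop
        (nhds (-((2 : ℂ) ^ (p + 1) - 1) / (α : ℂ))) := by
  intro p
  induction p with
  | zero =>
      intro α hα
      have hα0 : (α : ℂ) ≠ 0 := by exact_mod_cast hα.ne'
      have h1 : Tendsto (fun t : ℝ => ((t : ℂ) * μ)⁻¹ - (α : ℂ)) atTop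
          (nhds (0 - (α : ℂ))) := by
        apply Tendsto.sub_const
        have hinv : Tendsto (fun t : ℝ => ((t : ℂ))⁻¹) atTop (nhds 0) := by
          have : Tendsto (fun t : ℝ => ((t⁻¹ : ℝ) : ℂ)) atTop (nhds ((0 : ℝ) : ℂ)) :=
            (Complex.continuous_ofReal.tendsto _).comp tendsto_inv_atTop_zero
          simpa using this
        have h := hinv.mul_const μ⁻¹
        rw [zero_mul] at h
        exact h.congr fun t => (mul_inv _ _).symm
      have h2 : Tendsto (fun t : ℝ => (((t : ℂ) * μ)⁻¹ - (α : ℂ))⁻¹) atTop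
          (nhds (0 - (α : ℂ))⁻¹) := by
        apply h1.inv₀
        simpa using hα0
      have heq : ∀ᶠ t : ℝ in atTop,
          (((t : ℂ) * μ)⁻¹ - (α : ℂ))⁻¹ = ((t : ℂ) * μ) * T 1 α ((t : ℂ) * μ) := by
        filter_upwards [eventually_gt_atTop (0 : ℝ)] with t ht
        have htz : ((t : ℂ) * μ) ≠ 0 := by
          exact mul_ne_zero (by exact_mod_cast ht.ne') hμ
        show (((t : ℂ) * μ)⁻¹ - (α : ℂ))⁻¹ = ((t : ℂ) * μ) * (1 - (α : ℂ) * ((t : ℂ) * μ))⁻¹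
        have hrw : ((t : ℂ) * μ)⁻¹ - (α : ℂ) = (1 - (α : ℂ) * ((t : ℂ) * μ)) / ((t : ℂ) * μ) := by
          rw [eq_div_iff htz, sub_mul, inv_mul_cancel₀ htz]
        rw [hrw, inv_div, div_eq_mul_inv]
      have := h2.congr' heq
      convert this using 2
      simp
      ring
  | succ p ih =>
      intro α hα
      have hα2 : (0 : ℝ) < α / 2 := by linarith
      have hαc : (α : ℂ) ≠ 0 := by exact_mod_cast hα.ne'
      have hd : ((2 : ℂ) ^ (p + 1) - 1) ≠ 0 := by
        intro h
        rw [sub_eq_zero] at h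
        have : (2 : ℂ) ^ (p + 1) = 1 := h
        have : ((2 : ℝ) ^ (p + 1) : ℂ) = ((1 : ℝ) : ℂ) := by push_cast; simpa using this
        have h2 : (2 : ℝ) ^ (p + 1) = 1 := by exact_mod_cast this
        have h3 : (1 : ℝ) < 2 ^ (p + 1) := one_lt_pow₀ (by norm_num) (Nat.succ_ne_zero p)
        linarith
      have t1 := ih (α / 2) hα2
      have t2 := ih α hα
      have comb : Tendsto (fun t : ℝ =>
          ((2 : ℂ) ^ (p + 1) * (((t : ℂ) * μ) * T (p + 1) (α / 2) ((t : ℂ) * μ))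
            - ((t : ℂ) * μ) * T (p + 1) α ((t : ℂ) * μ)) / ((2 : ℂ) ^ (p + 1) - 1)) atTop
          (nhds (((2 : ℂ) ^ (p + 1) * (-((2 : ℂ) ^ (p + 1) - 1) / ((α / 2 : ℝ) : ℂ))
            - (-((2 : ℂ) ^ (p + 1) - 1) / (α : ℂ))) / ((2 : ℂ) ^ (p + 1) - 1))) := by
        exact (((t1.const_mul _).sub t2).div_const _)
      have heq : ∀ t : ℝ,
          ((2 : ℂ) ^ (p + 1) * (((t : ℂ) * μ) * T (p + 1) (α / 2) ((t : ℂ) * μ))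
            - ((t : ℂ) * μ) * T (p + 1) α ((t : ℂ) * μ)) / ((2 : ℂ) ^ (p + 1) - 1)
          = ((t : ℂ) * μ) * T (p + 1 + 1) α ((t : ℂ) * μ) := by
        intro t
        show _ = ((t : ℂ) * μ) * ((2 ^ (p + 1) * T (p + 1) (α / 2) ((t : ℂ) * μ)
          - T (p + 1) α ((t : ℂ) * μ)) / (2 ^ (p + 1) - 1))
        field_simp
      rw [funext heq] at comb
      convert comb using 2
      push_cast
      field_simp
      ring
  
theorem tase_asymptotic_stability (p : ℕ) (hp : 1 ≤ p) (α : ℝ) (hα : 0 < α)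
    (μ : ℂ) (hμ : μ ≠ 0) (hre : μ.re ≤ 0) :
    Tendsto (fun t : ℝ => ((t : ℂ) * μ) * T p α ((t : ℂ) * μ)) atTop
        (nhds (((-(2 ^ p - 1) / α : ℝ) : ℂ))) ∧
      ∀ C : ℝ, 0 < C → (2 ^ p - 1) / C ≤ α →
        -C ≤ -(2 ^ p - 1) / α ∧ -(2 ^ p - 1) / α < 0 := by
  obtain ⟨q, rfl⟩ := Nat.exists_eq_add_of_le hp
  constructor
  · have := tase_key μ hμ q α hα
    convert this using 2
    · ring_nf
    · push_cast; ring_nf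
  · intro C hC hle
    have h2 : (0 : ℝ) < 2 ^ (1 + q) - 1 := by
      have : (2:ℝ)^1 ≤ 2 ^ (1+q) := pow_le_pow_right₀ (by norm_num) (by omega)
      simp at this; linarith
    constructor
    · rw [neg_div, neg_le_neg_iff, div_le_iff₀ hα]
      rw [div_le_iff₀ hC] at hle
      nlinarith
    · exact div_neg_of_neg_of_pos (by linarith) hα
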